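/- arXiv:1712.08780 — 3 statements merged into one kernel-verified Lean document; each statement's English description precedes it below -/
import Mathlib

section
/- For every tree T without isolated vertices and every graph H, γ_gr^t(T × H) = γ_gr^t(T) · γ_gr^t(H), where × denotes the direct product. -/
open SimpleGraph

/-- A legal open neighborhood sequence in `G`. -/
def IsOpenLegal {α : Type*} (G : SimpleGraph α) (L : List α) : Prop :=
  L.Nodup ∧ ∀ i : Fin L.length, ∃ w, G.Adj (L.get i) w ∧
    ∀ j : Fin L.length, j < i → ¬ G.Adj (L.get j) w

/-- The Grundy total domination number of `G`. -/
noncomputable def grundyT {α : Type*} (G : SimpleGraph α) : ℕ :=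
  sSup {n | ∃ L : List α, IsOpenLegal G L ∧ L.length = n}

/-- A legal closed neighborhood (dominating) sequence in `G`. -/
def IsClosedLegal {α : Type*} (G : SimpleGraph α) (L : List α) : Prop :=
  L.Nodup ∧ ∀ i : Fin L.length, ∃ w, (G.Adj (L.get i) w ∨ L.get i = w) ∧
    ∀ j : Fin L.length, j < i → ¬ (G.Adj (L.get j) w ∨ L.get j = w)

/-- The Grundy domination number of `G`. -/
noncomputable def grundyDom {α : Type*} (G : SimpleGraph α) : ℕ :=
  sSup {n | ∃ L : List α, IsClosedLegal G L ∧ L.length = n}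

/-- The direct (tensor) product of simple graphs. -/
def directProd {α β : Type*} (G : SimpleGraph α) (H : SimpleGraph β) : SimpleGraph (α × β) where
  Adj x y := G.Adj x.1 y.1 ∧ H.Adj x.2 y.2
  symm := ⟨fun _ _ h => ⟨h.1.symm, h.2.symm⟩⟩
  loopless := ⟨fun x h => G.loopless.irrefl x.1 h.1⟩

/-- The lexicographic product of simple graphs. -/
def lexProd {α β : Type*} (G : SimpleGraph α) (H : SimpleGraph β) : SimpleGraph (α × β) where
  Adj x y := G.Adj x.1 y.1 ∨ (x.1 = y.1 ∧ H.Adj x.2 y.2)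
  symm := by
    constructor
    rintro x y (h | ⟨h1, h2⟩)
    · exact Or.inl h.symm
    · exact Or.inr ⟨h1.symm, h2.symm⟩
  loopless := by
    constructor
    rintro x (h | ⟨_, h⟩)
    · exact G.loopless.irrefl _ h
    · exact H.loopless.irrefl _ h

/-- The strong product of simple graphs. -/
def strongProd {α β : Type*} (G : SimpleGraph α) (H : SimpleGraph β) : SimpleGraph (α × β) where
  Adj x y := (G.Adj x.1 y.1 ∧ x.2 = y.2) ∨ (x.1 = y.1 ∧ H.Adj x.2 y.2) ∨
    (G.Adj x.1 y.1 ∧ H.Adj x.2 y.2)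
  symm := by
    constructor
    rintro x y (⟨h, e⟩ | ⟨e, h⟩ | ⟨h1, h2⟩)
    · exact Or.inl ⟨h.symm, e.symm⟩
    · exact Or.inr (Or.inl ⟨e.symm, h.symm⟩)
    · exact Or.inr (Or.inr ⟨h1.symm, h2.symm⟩)
  loopless := by
    constructor
    rintro x (⟨h, _⟩ | ⟨_, h⟩ | ⟨h, _⟩)
    · exact G.loopless.irrefl _ h
    · exact H.loopless.irrefl _ h
    · exact G.loopless.irrefl _ h

/-- The minimum number of complete bipartite subgraphs of `G` covering all edges of `G`. -/
noncomputable def bc {α : Type*} (G : SimpleGraph α) : ℕ :=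
  sInf {k | ∃ A B : Fin k → Set α,
    (∀ i a b, a ∈ A i → b ∈ B i → G.Adj a b) ∧
    (∀ u v, G.Adj u v → ∃ i, (u ∈ A i ∧ v ∈ B i) ∨ (v ∈ A i ∧ u ∈ B i))}

/-- `aD G L` is the number of entries of `L` not adjacent to any earlier entry. -/
noncomputable def aD {α : Type*} (G : SimpleGraph α) (L : List α) : ℕ :=
  {i : Fin L.length | ∀ j : Fin L.length, j < i → ¬ G.Adj (L.get j) (L.get i)}.ncard

/-- The vertex cover number of `G`. -/
noncomputable def vertexCoverNum {α : Type*} (G : SimpleGraph α) : ℕ :=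
  sInf {n | ∃ S : Finset α, S.card = n ∧ ∀ u v, G.Adj u v → u ∈ S ∨ v ∈ S}

/-- The independence number of `G`. -/
noncomputable def indepNum {α : Type*} (G : SimpleGraph α) : ℕ :=
  sSup {n | ∃ S : Finset α, S.card = n ∧ ∀ u ∈ S, ∀ v ∈ S, ¬ G.Adj u v}

section AuxGrundy

variable {α β : Type*}

lemma isOpenLegal_nil (G : SimpleGraph α) : IsOpenLegal G [] :=
  ⟨List.nodup_nil, fun i => i.elim0⟩

lemma grundySet_nonempty (G : SimpleGraph α) :
    {n | ∃ L : List α, IsOpenLegal G L ∧ L.length = n}.Nonempty :=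
  ⟨0, [], isOpenLegal_nil G, rfl⟩

lemma grundySet_bddAbove [Fintype α] (G : SimpleGraph α) :
    BddAbove {n | ∃ L : List α, IsOpenLegal G L ∧ L.length = n} := by
  refine ⟨Fintype.card α, ?_⟩
  rintro n ⟨L, hL, rfl⟩
  exact hL.1.length_le_card

lemma length_le_grundyT [Fintype α] (G : SimpleGraph α) {L : List α}
    (h : IsOpenLegal G L) : L.length ≤ grundyT G :=
  le_csSup (grundySet_bddAbove G) ⟨L, h, rfl⟩

lemma exists_grundyT_list [Fintype α] (G : SimpleGraph α) :
    ∃ L : List α, IsOpenLegal G L ∧ L.length = grundyT G :=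
  Nat.sSup_mem (grundySet_nonempty G) (grundySet_bddAbove G)

/-- Lexicographic comparison of div/mod decomposition. -/
lemma divmod_lex {a b n : ℕ} (hab : a < b) :
    a / n < b / n ∨ (a / n = b / n ∧ a % n < b % n) := by
  rcases Nat.lt_or_ge (a / n) (b / n) with h | h
  · exact Or.inl h
  · have h2 : a / n ≤ b / n := Nat.div_le_div_right hab.le
    have h3 : a / n = b / n := le_antisymm h2 h
    refine Or.inr ⟨h3, ?_⟩
    have ha := Nat.div_add_mod a n
    have hb : n * (a / n) + b % n = b := by rw [h3]; exact Nat.div_add_mod b n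
    omega

/-- The product of two legal sequences is legal in the direct product. -/
lemma product_legal (G : SimpleGraph α) (H : SimpleGraph β) {L1 : List α} {L2 : List β}
    (h1 : IsOpenLegal G L1) (h2 : IsOpenLegal H L2) (hn : 0 < L2.length) :
    ∃ L : List (α × β), IsOpenLegal (directProd G H) L ∧
      L.length = L1.length * L2.length := by
  set m := L1.length with hm
  set n := L2.length with hnn
  have hdiv : ∀ p : Fin (m * n), (p : ℕ) / n < m := by
    intro p
    exact (Nat.div_lt_iff_lt_mul hn).2 p.2
  have hmod : ∀ p : Fin (m * n), (p : ℕ) % n < n := fun p => Nat.mod_lt _ hn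
  set f : Fin (m * n) → α × β :=
    fun p => (L1.get ⟨(p : ℕ) / n, hdiv p⟩, L2.get ⟨(p : ℕ) % n, hmod p⟩) with hf
  have hinj1 : Function.Injective (L1.get) := List.nodup_iff_injective_get.1 h1.1
  have hinj2 : Function.Injective (L2.get) := List.nodup_iff_injective_get.1 h2.1
  refine ⟨List.ofFn f, ⟨?_, ?_⟩, by simp⟩
  · rw [List.nodup_ofFn]
    intro p q hpq
    simp only [hf, Prod.mk.injEq] at hpq
    have e1 : (p : ℕ) / n = (q : ℕ) / n := congrArg Fin.val (hinj1 hpq.1)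
    have e2 : (p : ℕ) % n = (q : ℕ) % n := congrArg Fin.val (hinj2 hpq.2)
    have hp : n * ((q : ℕ) / n) + (p : ℕ) % n = p := by
      rw [← e1]; exact Nat.div_add_mod _ n
    have hq := Nat.div_add_mod (q : ℕ) n
    exact Fin.ext (by omega)
  · intro i
    have hlen : (List.ofFn f).length = m * n := by simp
    set i' : Fin (m * n) := Fin.cast hlen i with hi'
    obtain ⟨w1, hw1a, hw1b⟩ := h1.2 ⟨(i' : ℕ) / n, hdiv i'⟩
    obtain ⟨w2, hw2a, hw2b⟩ := h2.2 ⟨(i' : ℕ) % n, hmod i'⟩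
    have hget : ∀ j : Fin (List.ofFn f).length, (List.ofFn f).get j = f (Fin.cast hlen j) := by
      intro j; rw [List.get_ofFn]
    refine ⟨(w1, w2), ?_, ?_⟩
    · rw [hget i]
      exact And.intro hw1a hw2a
    · intro j hj hadj
      rw [hget j] at hadj
      obtain ⟨hadj1, hadj2⟩ : G.Adj _ _ ∧ H.Adj _ _ := hadj
      set j' : Fin (m * n) := Fin.cast hlen j with hj'
      have hlt : (j' : ℕ) < (i' : ℕ) := hj
      rcases divmod_lex hlt with h | ⟨heq, hlt2⟩
      · exact hw1b ⟨(j' : ℕ) / n, hdiv j'⟩ h hadj1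
      · exact hw2b ⟨(j' : ℕ) % n, hmod j'⟩ hlt2 hadj2

end AuxGrundy

section AuxUpper

variable {α β : Type*}

/-- Extracting the second coordinates of a sorted index sublist of a legal sequence in
a direct product yields a legal sequence in the second factor, provided all first
coordinates interact through the cover vertex. -/
lemma extract_legal {G : SimpleGraph α} {H : SimpleGraph β} {L : List (α × β)}
    (hL : L.Nodup)
    (w : Fin L.length → α × β)
    (hw2 : ∀ i j : Fin L.length, j < i → ¬ (directProd G H).Adj (L.get j) (w i))
    (hH : ∀ i : Fin L.length, H.Adj (L.get i).2 (w i).2)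
    (idx : List (Fin L.length)) (hsort : idx.Pairwise (· < ·))
    (hG : ∀ i ∈ idx, ∀ j ∈ idx, G.Adj (L.get i).1 (w j).1) :
    IsOpenLegal H (idx.map (fun i => (L.get i).2)) := by
  set M := idx.map (fun i => (L.get i).2) with hM
  have hlen : M.length = idx.length := List.length_map _
  have hget : ∀ t : Fin M.length, M.get t = (L.get (idx.get (Fin.cast hlen t))).2 := by
    intro t
    simp [hM]
  have key : ∀ s t : Fin M.length, s < t →
      ¬ H.Adj (M.get s) (w (idx.get (Fin.cast hlen t))).2 := by
    intro s t hst hadj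
    rw [hget s] at hadj
    set is := idx.get (Fin.cast hlen s)
    set it := idx.get (Fin.cast hlen t)
    have hmem_s : is ∈ idx := idx.get_mem _
    have hmem_t : it ∈ idx := idx.get_mem _
    have hlt : is < it := hsort.rel_get_of_lt (by exact hst)
    exact hw2 it is hlt (And.intro (hG is hmem_s it hmem_t) hadj)
  constructor
  · rw [List.nodup_iff_injective_get]
    intro s t hst
    by_contra hne
    have hne' : s ≠ t := hne
    rcases lt_or_gt_of_ne hne' with h | h
    · refine key s t h ?_
      rw [hst, hget t]
      exact hH _
    · refine key t s h ?_
      rw [← hst, hget s]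
      exact hH _
  · intro t
    refine ⟨(w (idx.get (Fin.cast hlen t))).2, ?_, ?_⟩
    · rw [hget t]; exact hH _
    · intro s hs
      exact key s t hs

/-- Counting upper bound: a legal sequence in the direct product has length at most
`2k · grundyT H` where the `v i` form a vertex cover of `G`. -/
lemma upper_bound [Fintype β] {k : ℕ} {G : SimpleGraph α} (H : SimpleGraph β)
    (v : Fin k → α)
    (cover : ∀ x y, G.Adj x y → ∃ i, x = v i ∨ y = v i)
    {L : List (α × β)} (hL : IsOpenLegal (directProd G H) L) :
    L.length ≤ 2 * k * grundyT H := by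
  classical
  obtain ⟨hnd, hleg⟩ := hL
  choose w hw1 hw2 using hleg
  have hH : ∀ i : Fin L.length, H.Adj (L.get i).2 (w i).2 := fun i => And.right (hw1 i)
  have hGadj : ∀ i : Fin L.length, G.Adj (L.get i).1 (w i).1 := fun i => And.left (hw1 i)
  have hsel : ∀ i : Fin L.length, ∃ p : Fin k × Bool,
      (p.2 = true ∧ (w i).1 = v p.1) ∨ (p.2 = false ∧ (L.get i).1 = v p.1) := by
    intro i
    obtain ⟨l, hl | hl⟩ := cover _ _ (hGadj i)
    · exact ⟨(l, false), Or.inr ⟨rfl, hl⟩⟩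
    · exact ⟨(l, true), Or.inl ⟨rfl, hl⟩⟩
  choose φ hφ using hsel
  have hcard : ∀ b : Fin k × Bool,
      ((Finset.univ : Finset (Fin L.length)).filter (fun i => φ i = b)).card ≤ grundyT H := by
    intro b
    set F := (Finset.univ : Finset (Fin L.length)).filter (fun i => φ i = b) with hF
    set idx := F.sort (· ≤ ·) with hidx
    have hsort : idx.Pairwise (· < ·) := F.sortedLT_sort.pairwise
    have hmem : ∀ i ∈ idx, φ i = b := by
      intro i hi
      have := (Finset.mem_sort (α := Fin L.length) (· ≤ ·)).1 hi
      rw [hF] at this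
      exact (Finset.mem_filter.1 this).2
    have hG : ∀ i ∈ idx, ∀ j ∈ idx, G.Adj (L.get i).1 (w j).1 := by
      intro i hi j hj
      have hip := hφ i
      have hjp := hφ j
      rw [hmem i hi] at hip
      rw [hmem j hj] at hjp
      rcases hip with ⟨hb2, hi2⟩ | ⟨hb2, hi2⟩ <;>
        rcases hjp with ⟨hb2', hj2⟩ | ⟨hb2', hj2⟩
      · rw [hj2, ← hi2]; exact hGadj i
      · rw [hb2'] at hb2; exact absurd hb2 (by simp)
      · rw [hb2'] at hb2; exact absurd hb2 (by simp)
      · rw [hi2, ← hj2]; exact hGadj j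
    have hlegal := extract_legal hnd w hw2 hH idx hsort hG
    have := length_le_grundyT H hlegal
    rwa [List.length_map, hidx, Finset.length_sort] at this
  have := Finset.card_le_mul_card_image_of_maps_to
    (f := φ) (s := Finset.univ) (t := (Finset.univ : Finset (Fin k × Bool)))
    (fun a _ => Finset.mem_univ _) (grundyT H) (fun b _ => hcard b)
  simp only [Finset.card_univ, Fintype.card_fin, Fintype.card_prod, Fintype.card_bool] at this
  calc L.length ≤ grundyT H * (k * 2) := this
    _ = 2 * k * grundyT H := by ring

end AuxUpper

section AuxTree

variable {α : Type*}

lemma exists_shortest_path {T : SimpleGraph α} (hc : T.Connected) (a b : α) :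
    ∃ p : T.Walk a b, p.IsPath ∧ p.length = T.dist a b := by
  classical
  obtain ⟨q, hq⟩ := hc.exists_walk_length_eq_dist a b
  refine ⟨q.bypass, q.bypass_isPath, le_antisymm ?_ ?_⟩
  · calc q.bypass.length ≤ q.length := q.length_bypass_le
      _ = T.dist a b := hq
  · exact SimpleGraph.dist_le _

lemma dist_le_of_mem_support [DecidableEq α] {T : SimpleGraph α} {r b u : α} (p : T.Walk r b)
    (hu : u ∈ p.support) : T.dist r u ≤ (p.takeUntil u hu).length :=
  SimpleGraph.dist_le _

/-- In a tree, adjacent vertices are at different distances from any root. -/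
lemma tree_dist_ne_of_adj {T : SimpleGraph α} (hT : T.IsTree) {r u x : α}
    (h : T.Adj u x) : T.dist r x ≠ T.dist r u := by
  classical
  intro heq
  have hc := hT.isConnected
  obtain ⟨q, hq, hqlen⟩ := exists_shortest_path hc r x
  by_cases hu : u ∈ q.support
  · have h1 : T.dist r u ≤ (q.takeUntil u hu).length := dist_le_of_mem_support q hu
    have h2 := congrArg SimpleGraph.Walk.length (q.take_spec hu)
    rw [SimpleGraph.Walk.length_append] at h2
    have h3 : (q.dropUntil u hu).length = 0 := by omega
    have := SimpleGraph.Walk.eq_of_length_eq_zero h3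
    exact h.ne this
  · obtain ⟨p, hp, hplen⟩ := exists_shortest_path hc r u
    have hp1 : p.reverse.IsPath := (SimpleGraph.Walk.isPath_reverse_iff p).2 hp
    have hq1 : (SimpleGraph.Walk.cons h q.reverse).IsPath := by
      rw [SimpleGraph.Walk.cons_isPath_iff]
      refine ⟨(SimpleGraph.Walk.isPath_reverse_iff q).2 hq, ?_⟩
      rw [SimpleGraph.Walk.support_reverse, List.mem_reverse]
      exact hu
    have huniq := hT.existsUnique_path u r
    obtain ⟨w0, -, hBoth⟩ := huniq
    have e1 := hBoth _ hp1
    have e2 := hBoth _ hq1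
    have : p.reverse = SimpleGraph.Walk.cons h q.reverse := e1.trans e2.symm
    have hlen := congrArg SimpleGraph.Walk.length this
    rw [SimpleGraph.Walk.length_reverse, SimpleGraph.Walk.length_cons,
      SimpleGraph.Walk.length_reverse] at hlen
    omega

/-- In a tree, a vertex has at most one neighbor closer to the root. -/
lemma tree_unique_parent {T : SimpleGraph α} (hT : T.IsTree) {r u x y : α}
    (hx : T.Adj u x) (hy : T.Adj u y)
    (hdx : T.dist r x + 1 = T.dist r u) (hdy : T.dist r y + 1 = T.dist r u) : x = y := by
  classical
  have hc := hT.isConnected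
  obtain ⟨p, hp, hplen⟩ := exists_shortest_path hc r x
  obtain ⟨q, hq, hqlen⟩ := exists_shortest_path hc r y
  have hup : u ∉ p.support := by
    intro hu
    have h1 := dist_le_of_mem_support p hu
    have h2 := SimpleGraph.Walk.length_takeUntil_le p hu
    omega
  have huq : u ∉ q.support := by
    intro hu
    have h1 := dist_le_of_mem_support q hu
    have h2 := SimpleGraph.Walk.length_takeUntil_le q hu
    omega
  have hp1 : (SimpleGraph.Walk.cons hx p.reverse).IsPath := by
    rw [SimpleGraph.Walk.cons_isPath_iff]
    refine ⟨(SimpleGraph.Walk.isPath_reverse_iff p).2 hp, ?_⟩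
    rw [SimpleGraph.Walk.support_reverse, List.mem_reverse]
    exact hup
  have hq1 : (SimpleGraph.Walk.cons hy q.reverse).IsPath := by
    rw [SimpleGraph.Walk.cons_isPath_iff]
    refine ⟨(SimpleGraph.Walk.isPath_reverse_iff q).2 hq, ?_⟩
    rw [SimpleGraph.Walk.support_reverse, List.mem_reverse]
    exact huq
  obtain ⟨w0, -, hBoth⟩ := hT.existsUnique_path u r
  have e : SimpleGraph.Walk.cons hx p.reverse = SimpleGraph.Walk.cons hy q.reverse :=
    (hBoth _ hp1).trans (hBoth _ hq1).symm
  have := congrArg (fun z => SimpleGraph.Walk.getVert z 1) e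
  simpa [SimpleGraph.Walk.getVert_cons_succ, SimpleGraph.Walk.getVert_zero] using this

/-- A finite set spanning at least one edge of a tree contains a "leaf": a vertex with a
unique neighbor inside the set. -/
lemma exists_set_leaf [Fintype α] {T : SimpleGraph α} (hT : T.IsTree) (S : Finset α)
    (hS : ∃ x ∈ S, ∃ y ∈ S, T.Adj x y) :
    ∃ u ∈ S, ∃ v ∈ S, T.Adj u v ∧ ∀ x ∈ S, T.Adj u x → x = v := by
  classical
  have hc := hT.isConnected
  obtain ⟨r⟩ := hc.nonempty
  set D := S.filter (fun x => ∃ y ∈ S, T.Adj x y) with hD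
  have hDne : D.Nonempty := by
    obtain ⟨x, hx, y, hy, hxy⟩ := hS
    exact ⟨x, Finset.mem_filter.2 ⟨hx, ⟨y, hy, hxy⟩⟩⟩
  obtain ⟨u, huD, hmax⟩ := Finset.exists_max_image D (fun x => T.dist r x) hDne
  obtain ⟨huS, v, hvS, huv⟩ := Finset.mem_filter.1 huD
  have hkey : ∀ x, x ∈ S → T.Adj u x → T.dist r x + 1 = T.dist r u := by
    intro x hxS hux
    have hxD : x ∈ D := Finset.mem_filter.2 ⟨hxS, ⟨u, huS, hux.symm⟩⟩
    have hle : T.dist r x ≤ T.dist r u := hmax x hxD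
    have hne : T.dist r x ≠ T.dist r u := tree_dist_ne_of_adj hT hux
    have hge : T.dist r u ≤ T.dist r x + 1 := by
      have htri := hc.dist_triangle (u := r) (v := x) (w := u)
      have h1 : T.dist x u ≤ 1 := SimpleGraph.dist_le (hux.symm.toWalk)
      omega
    omega
  refine ⟨u, huS, v, hvS, huv, fun x hxS hux => ?_⟩
  exact tree_unique_parent hT hux huv (hkey x hxS hux) (hkey v hvS huv)

end AuxTree

section AuxPeel

variable {α : Type*}

/-- Iteratively peeling off leaf edges of a tree restricted to a finite vertex set. -/
lemma peel_aux [Fintype α] [DecidableEq α] {T : SimpleGraph α} (hT : T.IsTree) :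
    ∀ n : ℕ, ∀ S : Finset α, S.card ≤ n → ∃ (k : ℕ) (u v : Fin k → α),
      (∀ i, u i ∈ S) ∧ (∀ i, v i ∈ S) ∧
      Function.Injective u ∧ Function.Injective v ∧ (∀ i j, u i ≠ v j) ∧
      (∀ i, T.Adj (u i) (v i)) ∧
      (∀ i x, x ∈ S → T.Adj (u i) x → x = v i ∨ ∃ j, j < i ∧ (x = u j ∨ x = v j)) ∧
      (∀ x y, x ∈ S → y ∈ S → T.Adj x y → ∃ i, x = v i ∨ y = v i) := by
  intro n
  induction n with
  | zero =>
    intro S hS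
    have hempty : S = ∅ := Finset.card_eq_zero.1 (Nat.le_zero.1 hS)
    refine ⟨0, Fin.elim0, Fin.elim0, fun i => i.elim0, fun i => i.elim0,
      fun i => i.elim0, fun i => i.elim0, fun i => i.elim0, fun i => i.elim0,
      fun i x hx => absurd hx (by simp [hempty]), ?_⟩
    intro x y hx
    exact absurd hx (by simp [hempty])
  | succ n ih =>
    intro S hS
    by_cases hedge : ∃ x ∈ S, ∃ y ∈ S, T.Adj x y
    · obtain ⟨u0, hu0, v0, hv0, huv0, hleaf⟩ := exists_set_leaf hT S hedge
      set S' := (S.erase u0).erase v0 with hS'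
      have hcard : S'.card ≤ n := by
        have h1 : (S.erase u0).card < S.card := Finset.card_erase_lt_of_mem hu0
        have h2 : S'.card ≤ (S.erase u0).card := Finset.card_erase_le
        omega
      obtain ⟨k, u, v, humem, hvmem, huinj, hvinj, huvne, hadj, hP4, hcov⟩ := ih S' hcard
      have hS'sub : ∀ z ∈ S', z ∈ S := by
        intro z hz
        exact Finset.mem_of_mem_erase (Finset.mem_of_mem_erase hz)
      have hu0nS' : u0 ∉ S' := by
        intro h
        exact (Finset.ne_of_mem_erase (Finset.mem_of_mem_erase h)) rfl
      have hv0nS' : v0 ∉ S' := fun h => (Finset.ne_of_mem_erase h) rfl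
      refine ⟨k + 1, Fin.cons u0 u, Fin.cons v0 v, ?_, ?_, ?_, ?_, ?_, ?_, ?_, ?_⟩
      · intro i
        refine Fin.cases ?_ ?_ i
        · simpa using hu0
        · intro j; simpa using hS'sub _ (humem j)
      · intro i
        refine Fin.cases ?_ ?_ i
        · simpa using hv0
        · intro j; simpa using hS'sub _ (hvmem j)
      · rw [Fin.cons_injective_iff]
        refine ⟨?_, huinj⟩
        rintro ⟨l, hl⟩
        exact hu0nS' (hl ▸ humem l)
      · rw [Fin.cons_injective_iff]
        refine ⟨?_, hvinj⟩
        rintro ⟨l, hl⟩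
        exact hv0nS' (hl ▸ hvmem l)
      · intro i j
        induction i using Fin.cases with
        | zero =>
          induction j using Fin.cases with
          | zero => simpa using huv0.ne
          | succ l =>
            simp only [Fin.cons_zero, Fin.cons_succ]
            intro hl
            exact hu0nS' (hl ▸ hvmem l)
        | succ l =>
          induction j using Fin.cases with
          | zero =>
            simp only [Fin.cons_zero, Fin.cons_succ]
            intro hl
            exact hv0nS' (hl ▸ humem l)
          | succ l' =>
            simp only [Fin.cons_succ]
            exact huvne l l'
      · intro i
        refine Fin.cases ?_ ?_ i
        · simpa using huv0
        · intro j; simpa using hadj j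
      · intro i x hx hadjx
        induction i using Fin.cases with
        | zero =>
          rw [Fin.cons_zero] at hadjx
          exact Or.inl (by simpa using hleaf x hx hadjx)
        | succ l =>
          rw [Fin.cons_succ] at hadjx
          have h := hadjx
          by_cases hxu0 : x = u0
          · exact Or.inr ⟨0, Fin.succ_pos l, Or.inl (by simpa using hxu0)⟩
          by_cases hxv0 : x = v0
          · exact Or.inr ⟨0, Fin.succ_pos l, Or.inr (by simpa using hxv0)⟩
          have hxS' : x ∈ S' := Finset.mem_erase.2 ⟨hxv0, Finset.mem_erase.2 ⟨hxu0, hx⟩⟩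
          rcases hP4 l x hxS' h with h1 | ⟨j, hjl, hj⟩
          · exact Or.inl (by simpa using h1)
          · refine Or.inr ⟨j.succ, ?_, ?_⟩
            · exact Fin.succ_lt_succ_iff.2 hjl
            · rcases hj with hj | hj
              · exact Or.inl (by simpa using hj)
              · exact Or.inr (by simpa using hj)
      · intro x y hx hy hadjxy
        by_cases hxv0 : x = v0
        · exact ⟨0, Or.inl (by simpa using hxv0)⟩
        by_cases hyv0 : y = v0
        · exact ⟨0, Or.inr (by simpa using hyv0)⟩
        by_cases hxu0 : x = u0
        · have := hleaf y hy (hxu0 ▸ hadjxy)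
          exact ⟨0, Or.inr (by simpa using this)⟩
        by_cases hyu0 : y = u0
        · have := hleaf x hx (hyu0 ▸ hadjxy.symm)
          exact ⟨0, Or.inl (by simpa using this)⟩
        have hxS' : x ∈ S' := Finset.mem_erase.2 ⟨hxv0, Finset.mem_erase.2 ⟨hxu0, hx⟩⟩
        have hyS' : y ∈ S' := Finset.mem_erase.2 ⟨hyv0, Finset.mem_erase.2 ⟨hyu0, hy⟩⟩
        obtain ⟨i, hi⟩ := hcov x y hxS' hyS' hadjxy
        refine ⟨i.succ, ?_⟩
        rcases hi with hi | hi
        · exact Or.inl (by simpa using hi)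
        · exact Or.inr (by simpa using hi)
    · refine ⟨0, Fin.elim0, Fin.elim0, fun i => i.elim0, fun i => i.elim0,
        fun i => i.elim0, fun i => i.elim0, fun i => i.elim0, fun i => i.elim0,
        fun i x hx => i.elim0, ?_⟩
      intro x y hx hy hadjxy
      exact absurd ⟨x, hx, y, hy, hadjxy⟩ hedge

end AuxPeel

theorem grundyT_directProd_tree {α β : Type*} [Fintype α] [Fintype β]
    (T : SimpleGraph α) (hT : T.IsTree) (hiso : ∀ v, ∃ w, T.Adj v w)
    (H : SimpleGraph β) :
    grundyT (directProd T H) = grundyT T * grundyT H := by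
  classical
  obtain ⟨k, u, v, -, -, huinj, hvinj, huvne, hadj, hP4, hcov⟩ :=
    peel_aux hT (Finset.univ : Finset α).card Finset.univ le_rfl
  have hP4' : ∀ i x, T.Adj (u i) x → x = v i ∨ ∃ j, j < i ∧ (x = u j ∨ x = v j) :=
    fun i x h => hP4 i x (Finset.mem_univ x) h
  have hcov' : ∀ x y, T.Adj x y → ∃ i, x = v i ∨ y = v i :=
    fun x y h => hcov x y (Finset.mem_univ x) (Finset.mem_univ y) h
  -- A legal sequence of length 2k in T.
  have hglt : 2 * k ≤ grundyT T := by
    have hcase : ∀ p : ℕ, p < 2 * k → ¬ p < k → 2 * k - 1 - p < k := fun p h1 h2 => by omega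
    set g : Fin (2 * k) → α := fun p =>
      if h : (p : ℕ) < k then u ⟨(p : ℕ), h⟩
      else v ⟨2 * k - 1 - (p : ℕ), hcase _ p.2 h⟩ with hg
    have hlen : (List.ofFn g).length = 2 * k := by simp
    have hget : ∀ j : Fin (List.ofFn g).length, (List.ofFn g).get j = g (Fin.cast hlen j) := by
      intro j; rw [List.get_ofFn]
    have hlegal : IsOpenLegal T (List.ofFn g) := by
      constructor
      · rw [List.nodup_ofFn]
        intro p q hpq
        rw [hg] at hpq
        simp only at hpq
        by_cases hp : (p : ℕ) < k <;> by_cases hq : (q : ℕ) < k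
        · rw [dif_pos hp, dif_pos hq] at hpq
          have := congrArg Fin.val (huinj hpq)
          exact Fin.ext (by simpa using this)
        · rw [dif_pos hp, dif_neg hq] at hpq
          exact absurd hpq (huvne _ _)
        · rw [dif_neg hp, dif_pos hq] at hpq
          exact absurd hpq.symm (huvne _ _)
        · rw [dif_neg hp, dif_neg hq] at hpq
          have := congrArg Fin.val (hvinj hpq)
          simp only at this
          have hp2 := p.2; have hq2 := q.2
          exact Fin.ext (by omega)
      · intro i
        set i' : Fin (2 * k) := Fin.cast hlen i with hi'
        by_cases hik : (i' : ℕ) < k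
        · refine ⟨v ⟨(i' : ℕ), hik⟩, ?_, ?_⟩
          · rw [hget i]
            show T.Adj (g i') _
            rw [hg]
            simp only
            rw [dif_pos hik]
            exact hadj _
          · intro j hj hadjj
            rw [hget j] at hadjj
            set j' : Fin (2 * k) := Fin.cast hlen j with hj'
            have hjlt : (j' : ℕ) < (i' : ℕ) := hj
            have hjk : (j' : ℕ) < k := lt_trans hjlt hik
            rw [hg] at hadjj
            simp only at hadjj
            rw [dif_pos hjk] at hadjj
            rcases hP4' ⟨(j' : ℕ), hjk⟩ _ hadjj with h1 | ⟨l, hl, h2 | h2⟩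
            · have := congrArg Fin.val (hvinj h1)
              simp only at this
              omega
            · exact (huvne l ⟨(i' : ℕ), hik⟩) h2.symm
            · have := congrArg Fin.val (hvinj h2)
              simp only at this
              have hll : (l : ℕ) < (j' : ℕ) := hl
              omega
        · have ha : 2 * k - 1 - (i' : ℕ) < k := hcase _ i'.2 hik
          refine ⟨u ⟨2 * k - 1 - (i' : ℕ), ha⟩, ?_, ?_⟩
          · rw [hget i]
            show T.Adj (g i') _
            rw [hg]
            simp only
            rw [dif_neg hik]
            exact (hadj _).symm
          · intro j hj hadjj
            rw [hget j] at hadjj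
            set j' : Fin (2 * k) := Fin.cast hlen j with hj'
            have hjlt : (j' : ℕ) < (i' : ℕ) := hj
            rw [hg] at hadjj
            simp only at hadjj
            by_cases hjk : (j' : ℕ) < k
            · rw [dif_pos hjk] at hadjj
              rcases lt_trichotomy ((j' : ℕ)) (2 * k - 1 - (i' : ℕ)) with hc | hc | hc
              · rcases hP4' ⟨(j' : ℕ), hjk⟩ _ hadjj with h1 | ⟨l, hl, h2 | h2⟩
                · exact (huvne _ _) h1
                · have := congrArg Fin.val (huinj h2)
                  simp only at this
                  have hll : (l : ℕ) < (j' : ℕ) := hl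
                  omega
                · exact (huvne _ _) h2
              · have hbe : (⟨(j' : ℕ), hjk⟩ : Fin k) = ⟨2 * k - 1 - (i' : ℕ), ha⟩ :=
                  Fin.ext hc
                rw [hbe] at hadjj
                exact T.loopless.irrefl _ hadjj
              · rcases hP4' ⟨2 * k - 1 - (i' : ℕ), ha⟩ _ hadjj.symm with h1 | ⟨l, hl, h2 | h2⟩
                · exact (huvne _ _) h1
                · have := congrArg Fin.val (huinj h2)
                  simp only at this
                  have hll : (l : ℕ) < 2 * k - 1 - (i' : ℕ) := hl
                  omega
                · exact (huvne _ _) h2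
            · rw [dif_neg hjk] at hadjj
              have hc : 2 * k - 1 - (i' : ℕ) < 2 * k - 1 - (j' : ℕ) := by
                have := i'.2
                omega
              rcases hP4' ⟨2 * k - 1 - (i' : ℕ), ha⟩ _ hadjj.symm with h1 | ⟨l, hl, h2 | h2⟩
              · have := congrArg Fin.val (hvinj h1)
                simp only at this
                omega
              · exact (huvne _ _) h2.symm
              · have := congrArg Fin.val (hvinj h2)
                simp only at this
                have hll : (l : ℕ) < 2 * k - 1 - (i' : ℕ) := hl
                omega
    have := length_le_grundyT T hlegal
    rwa [hlen] at this
  -- Upper bound.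
  have hub : grundyT (directProd T H) ≤ 2 * k * grundyT H := by
    refine csSup_le (grundySet_nonempty _) ?_
    rintro m ⟨L, hL, rfl⟩
    exact upper_bound H v hcov' hL
  -- Lower bound.
  obtain ⟨L1, hL1, e1⟩ := exists_grundyT_list T
  obtain ⟨L2, hL2, e2⟩ := exists_grundyT_list H
  have hlb : grundyT T * grundyT H ≤ grundyT (directProd T H) := by
    rcases Nat.eq_zero_or_pos L2.length with h0 | hpos
    · rw [← e2, h0, Nat.mul_zero]
      exact Nat.zero_le _
    · obtain ⟨L, hL, hlenL⟩ := product_legal T H hL1 hL2 hpos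
      have := length_le_grundyT (directProd T H) hL
      rw [hlenL, e1, e2] at this
      exact this
  have hfinal : 2 * k * grundyT H ≤ grundyT T * grundyT H :=
    Nat.mul_le_mul_right _ hglt
  omega
end

section
/- For odd integers n_1, n_2 ≥ 3, the Grundy total domination number of the direct product of cycles satisfies γ_gr^t(C_{n_1} × C_{n_2}) = γ_gr^t(C_{n_1}) · γ_gr^t(C_{n_2}) = (n_1 − 1)(n_2 − 1). -/
open SimpleGraph

section AuxGrundy
open Submodule Module

open Classical in

noncomputable def nbv {α : Type*} (G : SimpleGraph α) (v : α) : α → ZMod 2 :=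
  fun w => if G.Adj v w then 1 else 0

lemma nbv_indep {α : Type*} (G : SimpleGraph α) {L : List α} (hL : IsOpenLegal G L) :
    LinearIndependent (ZMod 2) (fun i : Fin L.length => nbv G (L.get i)) := by
  classical
  rw [linearIndependent_iff']
  intro s g hsum j hj
  by_contra hg
  set T := s.filter (fun i => g i ≠ 0) with hT
  have hjT : j ∈ T := by simp [hT, hj, hg]
  have hTne : T.Nonempty := ⟨j, hjT⟩
  obtain ⟨w, hadj, hw⟩ := hL.2 (T.max' hTne)
  have := congrFun hsum w
  simp only [Finset.sum_apply, Pi.smul_apply, Pi.zero_apply, smul_eq_mul] at this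
  rw [Finset.sum_eq_single (T.max' hTne)] at this
  · rw [nbv, if_pos hadj, mul_one] at this
    exact (Finset.mem_filter.1 (T.max'_mem hTne)).2 this
  · intro i hi hne
    by_cases hgi : g i = 0
    · simp [hgi]
    · have hiT : i ∈ T := by simp [hT, hi, hgi]
      have hle : i ≤ T.max' hTne := T.le_max' i hiT
      have hlt : i < T.max' hTne := lt_of_le_of_ne hle hne
      rw [nbv, if_neg (hw i hlt), mul_zero]
  · intro h
    exact absurd (T.max'_mem hTne) (by simp [hT] at h ⊢; intro hc; exact absurd h (by simp_all))

lemma length_le_finrank {α : Type*} [Fintype α] (G : SimpleGraph α)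
    (W : Submodule (ZMod 2) (α → ZMod 2)) (hW : ∀ v, nbv G v ∈ W)
    {L : List α} (hL : IsOpenLegal G L) : L.length ≤ finrank (ZMod 2) W := by
  have h := nbv_indep G hL
  have hle : Submodule.span (ZMod 2) (Set.range fun i : Fin L.length => nbv G (L.get i)) ≤ W := by
    rw [Submodule.span_le]
    rintro x ⟨i, rfl⟩
    exact hW _
  calc L.length = Fintype.card (Fin L.length) := (Fintype.card_fin _).symm
    _ = finrank (ZMod 2) (Submodule.span (ZMod 2)
          (Set.range fun i : Fin L.length => nbv G (L.get i))) := (finrank_span_eq_card h).symm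
    _ ≤ finrank (ZMod 2) W := Submodule.finrank_mono hle

noncomputable def sumF (α : Type*) [Fintype α] : (α → ZMod 2) →ₗ[ZMod 2] ZMod 2 :=
  ∑ w : α, LinearMap.proj w

lemma sumF_apply {α : Type*} [Fintype α] (c : α → ZMod 2) : sumF α c = ∑ w, c w := by
  simp [sumF]

lemma finrank_ker_sumF (α : Type*) [Fintype α] [Nonempty α] :
    finrank (ZMod 2) (LinearMap.ker (sumF α)) = Fintype.card α - 1 := by
  have hsurj : Function.Surjective (sumF α) := by
    classical
    intro x
    obtain ⟨a⟩ := ‹Nonempty α›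
    exact ⟨Pi.single a x, by simp [sumF_apply]⟩
  have h := (sumF α).finrank_range_add_finrank_ker
  rw [LinearMap.range_eq_top.2 hsurj] at h
  simp only [finrank_top] at h
  rw [finrank_fintype_fun_eq_card] at h
  have h1 : finrank (ZMod 2) (ZMod 2) = 1 := finrank_self _
  omega

lemma nbv_mem_ker_of_even_degree {α : Type*} [Fintype α] {G : SimpleGraph α}
    [DecidableRel G.Adj] (v : α) (h : Even (G.degree v)) :
    nbv G v ∈ LinearMap.ker (sumF α) := by
  rw [LinearMap.mem_ker, sumF_apply]
  have : ∀ w, nbv G v w = if G.Adj v w then (1 : ZMod 2) else 0 := by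
    intro w; by_cases hw : G.Adj v w <;> simp [nbv, hw]
  rw [Finset.sum_congr rfl (fun w _ => this w)]
  rw [Finset.sum_boole]
  have : (Finset.univ.filter (G.Adj v)).card = G.degree v := by
    rw [SimpleGraph.degree, SimpleGraph.neighborFinset_def]
    congr 1
    ext w; simp
  rw [this]
  obtain ⟨k, hk⟩ := h
  rw [hk]
  push_cast
  exact CharTwo.add_self_eq_zero _

noncomputable def outerL (α β : Type*) :
    (α → ZMod 2) →ₗ[ZMod 2] (β → ZMod 2) →ₗ[ZMod 2] (α × β → ZMod 2) :=
  LinearMap.mk₂ (ZMod 2) (fun f g p => f p.1 * g p.2)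
    (fun f f' g => by funext p; simp [add_mul])
    (fun c f g => by funext p; simp [mul_assoc])
    (fun f g g' => by funext p; simp [mul_add])
    (fun c f g => by funext p; simp; ring)

lemma nbv_directProd {α β : Type*} (G : SimpleGraph α) (H : SimpleGraph β) (u : α) (v : β) :
    nbv (directProd G H) (u, v) = outerL α β (nbv G u) (nbv H v) := by
  funext p
  simp only [nbv, outerL, LinearMap.mk₂_apply]
  by_cases h1 : G.Adj u p.1 <;> by_cases h2 : H.Adj v p.2 <;>
    simp [directProd, h1, h2]

lemma finrank_map₂_outer_le {α β : Type*} [Fintype α] [Fintype β]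
    (W₁ : Submodule (ZMod 2) (α → ZMod 2)) (W₂ : Submodule (ZMod 2) (β → ZMod 2)) :
    finrank (ZMod 2) (Submodule.map₂ (outerL α β) W₁ W₂) ≤
      finrank (ZMod 2) W₁ * finrank (ZMod 2) W₂ := by
  set b := Module.finBasis (ZMod 2) W₁
  set c := Module.finBasis (ZMod 2) W₂
  have hW₁ : W₁ = span (ZMod 2) (Set.range fun i => (b i : α → ZMod 2)) := by
    have h : (fun i => (b i : α → ZMod 2)) = W₁.subtype ∘ b := rfl
    rw [h, Set.range_comp, ← Submodule.map_span, Basis.span_eq, Submodule.map_top,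
      Submodule.range_subtype]
  have hW₂ : W₂ = span (ZMod 2) (Set.range fun i => (c i : β → ZMod 2)) := by
    have h : (fun i => (c i : β → ZMod 2)) = W₂.subtype ∘ c := rfl
    rw [h, Set.range_comp, ← Submodule.map_span, Basis.span_eq, Submodule.map_top,
      Submodule.range_subtype]
  have key : Submodule.map₂ (outerL α β) W₁ W₂ = span (ZMod 2)
      (Set.range fun p : Fin (finrank (ZMod 2) W₁) × Fin (finrank (ZMod 2) W₂) =>
        outerL α β (b p.1 : α → ZMod 2) (c p.2 : β → ZMod 2)) := by
    conv_lhs => rw [hW₁, hW₂]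
    rw [Submodule.map₂_span_span, Set.image2_range]
  rw [key]
  exact (finrank_range_le_card _).trans_eq (by simp)

lemma mod_eq_one_cases {n x : ℕ} (hn : 2 ≤ n) (hx : x < 2*n) :
    x % n = 1 ↔ x = 1 ∨ x = n + 1 := by
  rcases Nat.lt_or_ge x n with h | h
  · rw [Nat.mod_eq_of_lt h]; omega
  · rw [Nat.mod_eq_sub_mod h, Nat.mod_eq_of_lt (by omega)]; omega

lemma cycle_adj_iff_val {n : ℕ} (hn : 2 ≤ n) (a b : Fin n) :
    (cycleGraph n).Adj a b ↔ a.val + 1 = b.val ∨ b.val + 1 = a.val ∨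
      (a.val = n - 1 ∧ b.val = 0) ∨ (b.val = n - 1 ∧ a.val = 0) := by
  have ha := a.isLt
  have hb := b.isLt
  rw [cycleGraph_adj']
  have h1 : (a - b).val = (n - b.val + a.val) % n := by rw [Fin.sub_def]
  have h2 : (b - a).val = (n - a.val + b.val) % n := by rw [Fin.sub_def]
  rw [h1, h2, mod_eq_one_cases hn (by omega), mod_eq_one_cases hn (by omega)]
  omega

def cf (m : ℕ) (i : ℕ) : ℕ := if i ≤ m then 2*i else 2*(2*m - i)+1

lemma cf_lt (m i : ℕ) (hi : i < 2*m) : cf m i < 2*m+1 := by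
  unfold cf; split <;> omega

def cycSeq (m : ℕ) : List (Fin (2*m+1)) :=
  List.ofFn fun i : Fin (2*m) => ⟨cf m i.val, cf_lt m i.val i.isLt⟩

lemma cycSeq_length (m : ℕ) : (cycSeq m).length = 2*m := by
  simp [cycSeq]

lemma cycSeq_get (m : ℕ) (i : Fin (cycSeq m).length) :
    (cycSeq m).get i = ⟨cf m i.val, cf_lt m i.val (by simpa [cycSeq_length] using i.isLt)⟩ := by
  unfold cycSeq
  refine (List.get_ofFn _ _).trans ?_
  rfl

lemma cycSeq_legal (m : ℕ) : IsOpenLegal (cycleGraph (2*m+1)) (cycSeq m) := by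
  constructor
  · rw [cycSeq, List.nodup_ofFn]
    intro i j hij
    simp only [Fin.mk.injEq] at hij
    have hi := i.isLt
    have hj := j.isLt
    apply Fin.ext
    revert hij
    unfold cf
    split_ifs <;> omega
  · intro i
    have hi : i.val < 2*m := by simpa [cycSeq_length] using i.isLt
    have h2 : 2 ≤ 2*m+1 := by omega
    have main : ∀ Wv : ℕ, (Wv = 2*i.val+1 ∧ i.val < m) ∨ (Wv = 0 ∧ i.val = m) ∨
        (Wv = 2*(2*m-i.val) ∧ m < i.val) → ∀ hWv : Wv < 2*m+1,
        (cycleGraph (2*m+1)).Adj ((cycSeq m).get i) ⟨Wv, hWv⟩ ∧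
        ∀ j : Fin (cycSeq m).length, j < i →
          ¬ (cycleGraph (2*m+1)).Adj ((cycSeq m).get j) ⟨Wv, hWv⟩ := by
      intro Wv hWv hlt
      constructor
      · rw [cycSeq_get, cycle_adj_iff_val h2]
        simp only [Fin.val_mk]
        unfold cf
        split_ifs <;> omega
      · intro j hj
        have hj2 : j.val < i.val := hj
        rw [cycSeq_get, cycle_adj_iff_val h2]
        simp only [Fin.val_mk]
        unfold cf
        split_ifs <;> omega
    rcases Nat.lt_trichotomy i.val m with hc | hc | hc
    · exact ⟨_, main (2*i.val+1) (by omega) (by omega)⟩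
    · exact ⟨_, main 0 (by omega) (by omega)⟩
    · exact ⟨_, main (2*(2*m-i.val)) (by omega) (by omega)⟩

def prodList {α β : Type*} (L1 : List α) (L2 : List β) (hb : 0 < L2.length) : List (α × β) :=
  List.ofFn fun k : Fin (L1.length * L2.length) =>
    (L1.get ⟨k.val / L2.length, (Nat.div_lt_iff_lt_mul hb).mpr k.isLt⟩,
     L2.get ⟨k.val % L2.length, Nat.mod_lt _ hb⟩)

lemma prodList_length {α β : Type*} (L1 : List α) (L2 : List β) (hb : 0 < L2.length) :
    (prodList L1 L2 hb).length = L1.length * L2.length := by simp [prodList]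

lemma prodList_get {α β : Type*} (L1 : List α) (L2 : List β) (hb : 0 < L2.length)
    (k : Fin (prodList L1 L2 hb).length) :
    (prodList L1 L2 hb).get k =
      (L1.get ⟨k.val / L2.length, (Nat.div_lt_iff_lt_mul hb).mpr
          (by simpa [prodList_length] using k.isLt)⟩,
       L2.get ⟨k.val % L2.length, Nat.mod_lt _ hb⟩) := by
  unfold prodList
  refine (List.get_ofFn _ _).trans ?_
  rfl

lemma isOpenLegal_prodList {α β : Type*} {G : SimpleGraph α} {H : SimpleGraph β}
    {L1 : List α} {L2 : List β} (h1 : IsOpenLegal G L1) (h2 : IsOpenLegal H L2)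
    (hb : 0 < L2.length) :
    IsOpenLegal (directProd G H) (prodList L1 L2 hb) := by
  have inj1 := List.nodup_iff_injective_get.mp h1.1
  have inj2 := List.nodup_iff_injective_get.mp h2.1
  constructor
  · rw [prodList, List.nodup_ofFn]
    intro k k' hkk
    simp only [Prod.mk.injEq] at hkk
    have e1 := inj1 hkk.1
    have e2 := inj2 hkk.2
    simp only [Fin.mk.injEq] at e1 e2
    apply Fin.ext
    rw [← Nat.div_add_mod k.val L2.length, ← Nat.div_add_mod k'.val L2.length, e1, e2]
  · intro i
    obtain ⟨w, hw, hwp⟩ := h1.2 ⟨i.val / L2.length, (Nat.div_lt_iff_lt_mul hb).mpr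
      (by simpa [prodList_length] using i.isLt)⟩
    obtain ⟨x, hx, hxp⟩ := h2.2 ⟨i.val % L2.length, Nat.mod_lt _ hb⟩
    refine ⟨(w, x), ?_, ?_⟩
    · rw [prodList_get]
      exact ⟨hw, hx⟩
    · intro j hj hadj
      rw [prodList_get] at hadj
      have hjlt : j.val < i.val := hj
      rcases Nat.lt_or_ge (j.val / L2.length) (i.val / L2.length) with hd | hd
      · exact hwp ⟨j.val / L2.length, (Nat.div_lt_iff_lt_mul hb).mpr
          (by simpa [prodList_length] using j.isLt)⟩ hd hadj.1
      · have hdeq : j.val / L2.length = i.val / L2.length := by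
          have := Nat.div_le_div_right (c := L2.length) (Nat.le_of_lt hjlt)
          omega
        have hmlt : j.val % L2.length < i.val % L2.length := by
          have key : ∀ a b q r r' : ℕ, a = q + r → b = q + r' → a < b → r < r' := by omega
          have d1 : j.val = L2.length * (j.val / L2.length) + j.val % L2.length :=
            (Nat.div_add_mod _ _).symm
          rw [hdeq] at d1
          have d2 : i.val = L2.length * (i.val / L2.length) + i.val % L2.length :=
            (Nat.div_add_mod _ _).symm
          exact key _ _ _ _ _ d1 d2 hjlt
        exact hxp ⟨j.val % L2.length, Nat.mod_lt _ hb⟩ hmlt hadj.2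
      

lemma cycle_ub {n : ℕ} (hn : 3 ≤ n) {L : List (Fin n)} (hL : IsOpenLegal (cycleGraph n) L) :
    L.length ≤ n - 1 := by
  obtain ⟨p, rfl⟩ : ∃ p, n = p + 3 := ⟨n - 3, by omega⟩
  have h := length_le_finrank (cycleGraph (p+3)) (LinearMap.ker (sumF (Fin (p+3))))
    (fun v => nbv_mem_ker_of_even_degree v
      (by rw [cycleGraph_degree_three_le]; exact ⟨1, rfl⟩)) hL
  rw [finrank_ker_sumF] at h
  simpa using h

lemma grundyT_cycle_odd (n : ℕ) (h3 : 3 ≤ n) (ho : Odd n) :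
    grundyT (cycleGraph n) = n - 1 := by
  obtain ⟨m, rfl⟩ : ∃ m, n = 2*m+1 := by
    obtain ⟨m, hm⟩ := ho; exact ⟨m, by omega⟩
  apply IsGreatest.csSup_eq
  constructor
  · exact ⟨cycSeq m, cycSeq_legal m, by rw [cycSeq_length]; omega⟩
  · rintro k ⟨L, hL, rfl⟩
    exact cycle_ub (by omega) hL

lemma prod_ub {n₁ n₂ : ℕ} (h₁ : 3 ≤ n₁) (h₂ : 3 ≤ n₂) {L : List (Fin n₁ × Fin n₂)}
    (hL : IsOpenLegal (directProd (cycleGraph n₁) (cycleGraph n₂)) L) :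
    L.length ≤ (n₁ - 1) * (n₂ - 1) := by
  obtain ⟨p₁, rfl⟩ : ∃ p, n₁ = p + 3 := ⟨n₁ - 3, by omega⟩
  obtain ⟨p₂, rfl⟩ : ∃ p, n₂ = p + 3 := ⟨n₂ - 3, by omega⟩
  have hW : ∀ v : Fin (p₁+3) × Fin (p₂+3),
      nbv (directProd (cycleGraph (p₁+3)) (cycleGraph (p₂+3))) v ∈
        Submodule.map₂ (outerL (Fin (p₁+3)) (Fin (p₂+3)))
          (LinearMap.ker (sumF (Fin (p₁+3)))) (LinearMap.ker (sumF (Fin (p₂+3)))) := by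
    rintro ⟨u, v⟩
    rw [nbv_directProd]
    exact Submodule.apply_mem_map₂ _
      (nbv_mem_ker_of_even_degree u (by rw [cycleGraph_degree_three_le]; exact ⟨1, rfl⟩))
      (nbv_mem_ker_of_even_degree v (by rw [cycleGraph_degree_three_le]; exact ⟨1, rfl⟩))
  have h := length_le_finrank _ _ hW hL
  refine h.trans ((finrank_map₂_outer_le _ _).trans ?_)
  rw [finrank_ker_sumF, finrank_ker_sumF]
  simp

end AuxGrundy

theorem grundyT_directProd_odd_cycles (n₁ n₂ : ℕ) (h₁ : 3 ≤ n₁) (h₂ : 3 ≤ n₂)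
    (ho₁ : Odd n₁) (ho₂ : Odd n₂) :
    grundyT (directProd (cycleGraph n₁) (cycleGraph n₂)) =
        grundyT (cycleGraph n₁) * grundyT (cycleGraph n₂) ∧
      grundyT (directProd (cycleGraph n₁) (cycleGraph n₂)) = (n₁ - 1) * (n₂ - 1) := by
  have hc1 := grundyT_cycle_odd n₁ h₁ ho₁
  have hc2 := grundyT_cycle_odd n₂ h₂ ho₂
  have hprod : grundyT (directProd (cycleGraph n₁) (cycleGraph n₂)) = (n₁ - 1) * (n₂ - 1) := by
    apply IsGreatest.csSup_eq
    constructor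
    · obtain ⟨m₁, rfl⟩ : ∃ m, n₁ = 2*m+1 := by
        obtain ⟨m, hm⟩ := ho₁; exact ⟨m, by omega⟩
      obtain ⟨m₂, rfl⟩ : ∃ m, n₂ = 2*m+1 := by
        obtain ⟨m, hm⟩ := ho₂; exact ⟨m, by omega⟩
      have hb : 0 < (cycSeq m₂).length := by rw [cycSeq_length]; omega
      refine ⟨prodList (cycSeq m₁) (cycSeq m₂) hb,
        isOpenLegal_prodList (cycSeq_legal m₁) (cycSeq_legal m₂) hb, ?_⟩
      rw [prodList_length, cycSeq_length, cycSeq_length]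
      congr 1 <;> omega
    · rintro k ⟨L, hL, rfl⟩
      exact prod_ub h₁ h₂ hL
  exact ⟨by rw [hprod, hc1, hc2], hprod⟩
end

section
/- For any graphs G and H, γ_gr^t(G ⊠ H) ≥ max{ γ_gr^t(G)·a(D) + (|D| − a(D))·γ_gr(G) : D is a legal closed neighborhood sequence of H }, where a(D) is the number of vertices in D not adjacent to any earlier vertex of D, and γ_gr(G) is the Grundy domination number of G. -/
open SimpleGraph

/-! ### Auxiliary machinery for the main theorem -/

section AuxGrundy

def OpenLegalFrom {γ : Type*} (G : SimpleGraph γ) (P L : List γ) : Prop :=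
  L.Nodup ∧ (∀ x ∈ L, x ∉ P) ∧ ∀ i : Fin L.length, ∃ w, G.Adj (L.get i) w ∧
    (∀ y ∈ P, ¬ G.Adj y w) ∧ ∀ j : Fin L.length, j < i → ¬ G.Adj (L.get j) w

lemma olf_nil {γ : Type*} (G : SimpleGraph γ) (P : List γ) : OpenLegalFrom G P [] :=
  ⟨List.nodup_nil, by simp, fun i => i.elim0⟩

lemma olf_append {γ : Type*} {G : SimpleGraph γ} {P A B : List γ}
    (hA : OpenLegalFrom G P A) (hB : OpenLegalFrom G (P ++ A) B) :
    OpenLegalFrom G P (A ++ B) := by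
  obtain ⟨hAnd, hAfr, hAleg⟩ := hA
  obtain ⟨hBnd, hBfr, hBleg⟩ := hB
  refine ⟨?_, ?_, ?_⟩
  · rw [List.nodup_append]
    exact ⟨hAnd, hBnd, fun x hxA y hyB hxy => hBfr y hyB (by subst hxy; simp [hxA])⟩
  · intro x hx hxP
    rcases List.mem_append.1 hx with h | h
    · exact hAfr x h hxP
    · exact hBfr x h (List.mem_append.2 (Or.inl hxP))
  · intro i
    by_cases hi : (i : ℕ) < A.length
    · obtain ⟨w, hw1, hw2, hw3⟩ := hAleg ⟨i, hi⟩
      refine ⟨w, ?_, hw2, ?_⟩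
      · simpa [List.get_eq_getElem, List.getElem_append_left hi] using hw1
      · intro j hj
        have hjv : (j : ℕ) < (i : ℕ) := Fin.lt_def.mp hj
        have hj' : (j : ℕ) < A.length := lt_trans hjv hi
        have := hw3 ⟨j, hj'⟩ (Fin.mk_lt_mk.mpr hjv)
        simpa [List.get_eq_getElem, List.getElem_append_left hj'] using this
    · push_neg at hi
      have hilen : (i : ℕ) < A.length + B.length := by
        have := i.isLt; simpa [List.length_append] using this
      have hiB : (i : ℕ) - A.length < B.length := by omega
      obtain ⟨w, hw1, hw2, hw3⟩ := hBleg ⟨(i : ℕ) - A.length, hiB⟩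
      refine ⟨w, ?_, ?_, ?_⟩
      · simpa [List.get_eq_getElem, List.getElem_append_right hi] using hw1
      · intro y hy; exact hw2 y (List.mem_append.2 (Or.inl hy))
      · intro j hj
        by_cases hjA : (j : ℕ) < A.length
        · have hmem : (A ++ B).get j ∈ A := by
            have : (A ++ B).get j = A[(j : ℕ)] := by
              simp [List.get_eq_getElem, List.getElem_append_left hjA]
            rw [this]; exact List.getElem_mem _
          exact hw2 _ (List.mem_append.2 (Or.inr hmem))
        · push_neg at hjA
          have hjv : (j : ℕ) < (i : ℕ) := Fin.lt_def.mp hj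
          have hjB : (j : ℕ) - A.length < B.length := by omega
          have hlt : ((j : ℕ) - A.length) < ((i : ℕ) - A.length) := by omega
          have := hw3 ⟨(j : ℕ) - A.length, hjB⟩ (Fin.mk_lt_mk.mpr hlt)
          simpa [List.get_eq_getElem, List.getElem_append_right hjA] using this

lemma olf_flatten {γ : Type*} (G : SimpleGraph γ) :
    ∀ (Bs : List (List γ)) (P : List γ),
    (∀ i : Fin Bs.length, OpenLegalFrom G (P ++ ((Bs.take (i : ℕ)).flatten)) (Bs.get i)) →
    OpenLegalFrom G P Bs.flatten
  | [], P, _ => olf_nil G P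
  | B :: Bs, P, h => by
    have h0 := h ⟨0, by simp⟩
    simp only [List.take_zero, List.flatten_nil, List.append_nil, List.get_eq_getElem,
      List.getElem_cons_zero] at h0
    rw [List.flatten_cons]
    refine olf_append h0 (olf_flatten G Bs (P ++ B) ?_)
    intro i
    have := h ⟨(i : ℕ) + 1, by simp [Nat.succ_lt_succ i.isLt]⟩
    simpa [List.take_succ_cons, List.flatten_cons, List.append_assoc,
      List.get_eq_getElem] using this

lemma isOpenLegal_of_olf {γ : Type*} {G : SimpleGraph γ} {L : List γ}
    (h : OpenLegalFrom G [] L) : IsOpenLegal G L :=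
  ⟨h.1, fun i => (h.2.2 i).imp (fun _ hw => ⟨hw.1, hw.2.2⟩)⟩

lemma grundyT_bdd {α : Type*} [Fintype α] (G : SimpleGraph α) :
    BddAbove {n | ∃ L : List α, IsOpenLegal G L ∧ L.length = n} := by
  refine ⟨Fintype.card α, ?_⟩
  rintro n ⟨L, hL, rfl⟩
  exact hL.1.length_le_card

lemma grundyDom_bdd {α : Type*} [Fintype α] (G : SimpleGraph α) :
    BddAbove {n | ∃ L : List α, IsClosedLegal G L ∧ L.length = n} := by
  refine ⟨Fintype.card α, ?_⟩
  rintro n ⟨L, hL, rfl⟩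
  exact hL.1.length_le_card

lemma exists_openLegal {α : Type*} [Fintype α] (G : SimpleGraph α) :
    ∃ L : List α, IsOpenLegal G L ∧ L.length = grundyT G := by
  have h0 : (0 : ℕ) ∈ {n | ∃ L : List α, IsOpenLegal G L ∧ L.length = n} :=
    ⟨[], ⟨List.nodup_nil, fun i => i.elim0⟩, rfl⟩
  exact Nat.sSup_mem ⟨0, h0⟩ (grundyT_bdd G)

lemma exists_closedLegal {α : Type*} [Fintype α] (G : SimpleGraph α) :
    ∃ L : List α, IsClosedLegal G L ∧ L.length = grundyDom G := by
  have h0 : (0 : ℕ) ∈ {n | ∃ L : List α, IsClosedLegal G L ∧ L.length = n} :=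
    ⟨[], ⟨List.nodup_nil, fun i => i.elim0⟩, rfl⟩
  exact Nat.sSup_mem ⟨0, h0⟩ (grundyDom_bdd G)

lemma le_grundyT {α : Type*} [Fintype α] (G : SimpleGraph α) {L : List α}
    (hL : IsOpenLegal G L) : L.length ≤ grundyT G :=
  le_csSup (grundyT_bdd G) ⟨L, hL, rfl⟩

lemma block_olf {α β : Type*} {G : SimpleGraph α} {H : SimpleGraph β}
    (Lg : List α) (d wd : β) (P : List (α × β))
    (hnd : Lg.Nodup)
    (hfresh : ∀ y ∈ P, y.2 ≠ d)
    (hPw : ∀ y ∈ P, ¬ H.Adj y.2 wd ∧ y.2 ≠ wd)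
    (hHw : H.Adj d wd ∨ d = wd)
    (hleg : ∀ s : Fin Lg.length, ∃ u,
      (G.Adj (Lg.get s) u ∨ (Lg.get s = u ∧ H.Adj d wd)) ∧
      ∀ t : Fin Lg.length, t < s → ¬ G.Adj (Lg.get t) u ∧ (H.Adj d wd → Lg.get t ≠ u)) :
    OpenLegalFrom (strongProd G H) P (Lg.map (fun g => (g, d))) := by
  refine ⟨?_, ?_, ?_⟩
  · exact hnd.map (fun a b h => (Prod.ext_iff.1 h).1)
  · intro x hx hxP
    obtain ⟨g, _, rfl⟩ := List.mem_map.1 hx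
    exact hfresh _ hxP rfl
  · intro s
    have hs : (s : ℕ) < Lg.length := by simpa using s.isLt
    obtain ⟨u, hu1, hu2⟩ := hleg ⟨s, hs⟩
    have hget : (Lg.map (fun g => (g, d))).get s = (Lg[(s : ℕ)], d) := by
      simp [List.get_eq_getElem]
    refine ⟨(u, wd), ?_, ?_, ?_⟩
    · rw [hget]
      rcases hu1 with h | ⟨he, hH⟩
      · rcases hHw with hH | he
        · exact Or.inr (Or.inr ⟨by simpa [List.get_eq_getElem] using h, hH⟩)
        · exact Or.inl ⟨by simpa [List.get_eq_getElem] using h, he⟩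
      · exact Or.inr (Or.inl ⟨by simpa [List.get_eq_getElem] using he, hH⟩)
    · rintro y hy (⟨_, h2⟩ | ⟨_, h2⟩ | ⟨_, h2⟩)
      · exact (hPw y hy).2 h2
      · exact (hPw y hy).1 h2
      · exact (hPw y hy).1 h2
    · intro t ht
      have htv : (t : ℕ) < (s : ℕ) := Fin.lt_def.mp ht
      have htl : (t : ℕ) < Lg.length := by simpa using t.isLt
      have hu2' := hu2 ⟨t, htl⟩ (Fin.mk_lt_mk.mpr htv)
      have hgett : (Lg.map (fun g => (g, d))).get t = (Lg[(t : ℕ)], d) := by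
        simp [List.get_eq_getElem]
      rw [hgett]
      rintro (⟨h1, _⟩ | ⟨h1, h2⟩ | ⟨h1, _⟩)
      · exact hu2'.1 (by simpa [List.get_eq_getElem] using h1)
      · exact hu2'.2 h2 (by simpa [List.get_eq_getElem] using h1)
      · exact hu2'.1 (by simpa [List.get_eq_getElem] using h1)

end AuxGrundy

theorem grundyT_strongProd_ge {α β : Type*} [Fintype α] [Fintype β]
    (G : SimpleGraph α) (H : SimpleGraph β) (D : List β) (hD : IsClosedLegal H D) :
    grundyT G * aD H D + (D.length - aD H D) * grundyDom G ≤
      grundyT (strongProd G H) := by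
  classical
  obtain ⟨LT, hLT, hLTlen⟩ := exists_openLegal G
  obtain ⟨LC, hLC, hLClen⟩ := exists_closedLegal G
  set S : Finset (Fin D.length) :=
    Finset.univ.filter (fun i => ∀ j : Fin D.length, j < i → ¬ H.Adj (D.get j) (D.get i))
    with hSdef
  have hSmem : ∀ i : Fin D.length, i ∈ S ↔
      (∀ j : Fin D.length, j < i → ¬ H.Adj (D.get j) (D.get i)) := by
    intro i; rw [hSdef]; simp
  have hScard : S.card = aD H D := by
    rw [aD]
    have hset : {i : Fin D.length | ∀ j : Fin D.length, j < i → ¬ H.Adj (D.get j) (D.get i)}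
        = ↑S := by ext i; simp [hSmem i]
    rw [hset, Set.ncard_coe_finset]
  have hwHex : ∀ i : Fin D.length, i ∉ S → ∃ w : β, H.Adj (D.get i) w ∧
      ∀ j : Fin D.length, j < i → ¬ H.Adj (D.get j) w ∧ D.get j ≠ w := by
    intro i hiS
    obtain ⟨w, hw1, hw2⟩ := hD.2 i
    have hadj : H.Adj (D.get i) w := by
      rcases hw1 with h | h
      · exact h
      · exfalso
        have hp : ¬ ∀ j : Fin D.length, j < i → ¬ H.Adj (D.get j) (D.get i) :=
          fun hp => hiS ((hSmem i).mpr hp)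
        push_neg at hp
        obtain ⟨j, hj, hadj⟩ := hp
        exact hw2 j hj (Or.inl (h ▸ hadj))
    refine ⟨w, hadj, fun j hj => ?_⟩
    have := hw2 j hj
    push_neg at this
    exact this
  choose wH hwH1 hwH2 using hwHex
  set blk : Fin D.length → List (α × β) :=
    fun i => (if i ∈ S then LT else LC).map (fun g => (g, D.get i)) with hblk
  set Bs : List (List (α × β)) := (List.finRange D.length).map blk with hBs
  have hBslen : Bs.length = D.length := by simp [hBs]
  have hBsget : ∀ (j : ℕ) (hj : j < D.length),
      Bs[j]'(by simpa [hBslen] using hj) = blk ⟨j, hj⟩ := by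
    intro j hj
    simp [hBs, List.getElem_map, List.getElem_finRange]
  have hmem_take : ∀ (i : ℕ) (y : α × β), y ∈ (Bs.take i).flatten →
      ∃ (j : Fin D.length) (g : α), (j : ℕ) < i ∧ y = (g, D.get j) := by
    intro i y hy
    rw [List.mem_flatten] at hy
    obtain ⟨l, hl, hyl⟩ := hy
    rw [List.mem_iff_getElem] at hl
    obtain ⟨j, hjlen, rfl⟩ := hl
    have hj' : j < i ∧ j < D.length := by
      have := hjlen
      simp only [List.length_take, hBslen, lt_min_iff] at this
      exact this
    rw [List.getElem_take] at hyl
    rw [hBsget j hj'.2] at hyl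
    rw [hblk] at hyl
    obtain ⟨g, _, rfl⟩ := List.mem_map.1 hyl
    exact ⟨⟨j, hj'.2⟩, g, hj'.1, rfl⟩
  have hblock : ∀ i : Fin Bs.length,
      OpenLegalFrom (strongProd G H) ([] ++ (Bs.take (i : ℕ)).flatten) (Bs.get i) := by
    intro i
    rw [List.nil_append]
    have hi : (i : ℕ) < D.length := by
      have h1 := i.isLt; omega
    set i' : Fin D.length := ⟨i, hi⟩ with hi'
    have hgeti : Bs.get i = blk i' := by
      rw [List.get_eq_getElem]; exact hBsget i hi
    rw [hgeti]
    simp only [hblk]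
    have hfresh : ∀ y ∈ (Bs.take (i : ℕ)).flatten, y.2 ≠ D.get i' := by
      intro y hy
      obtain ⟨j, g, hj, rfl⟩ := hmem_take _ y hy
      intro he
      have hji : (j : ℕ) = (i' : ℕ) := by
        have hee : D[(j : ℕ)] = D[(i' : ℕ)] := by
          simpa [List.get_eq_getElem] using he
        exact hD.1.getElem_inj_iff.mp hee
      simp only [hi'] at hji
      omega
    by_cases hiS : i' ∈ S
    · rw [if_pos hiS]
      refine block_olf LT (D.get i') (D.get i') _ hLT.1 hfresh ?_ (Or.inr rfl) ?_
      · intro y hy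
        obtain ⟨j, g, hj, rfl⟩ := hmem_take _ y hy
        have hjlt : j < i' := Fin.lt_def.mpr hj
        refine ⟨(hSmem i').mp hiS j hjlt, ?_⟩
        intro he
        have hee : D[(j : ℕ)] = D[(i' : ℕ)] := by
          simpa [List.get_eq_getElem] using he
        have := hD.1.getElem_inj_iff.mp hee
        omega
      · intro s
        obtain ⟨u, hu1, hu2⟩ := hLT.2 s
        exact ⟨u, Or.inl hu1, fun t ht => ⟨hu2 t ht, fun hH _ => (H.loopless.irrefl _ hH)⟩⟩
    · rw [if_neg hiS]
      refine block_olf LC (D.get i') (wH i' hiS) _ hLC.1 hfresh ?_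
        (Or.inl (hwH1 i' hiS)) ?_
      · intro y hy
        obtain ⟨j, g, hj, rfl⟩ := hmem_take _ y hy
        exact hwH2 i' hiS j (Fin.lt_def.mpr hj)
      · intro s
        obtain ⟨u, hu1, hu2⟩ := hLC.2 s
        refine ⟨u, ?_, fun t ht => ?_⟩
        · rcases hu1 with h | h
          · exact Or.inl h
          · exact Or.inr ⟨h, hwH1 i' hiS⟩
        · have := hu2 t ht
          push_neg at this
          exact ⟨this.1, fun _ => this.2⟩
  have hlegal : IsOpenLegal (strongProd G H) Bs.flatten :=
    isOpenLegal_of_olf (olf_flatten _ Bs [] hblock)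
  have hlen : Bs.flatten.length = S.card * LT.length + (D.length - S.card) * LC.length := by
    rw [List.length_flatten, hBs, List.map_map]
    have hfn : (List.length ∘ blk) = fun i : Fin D.length =>
        if i ∈ S then LT.length else LC.length := by
      funext i
      by_cases h : i ∈ S <;> simp [hblk, h]
    rw [hfn, ← Fin.sum_univ_def, Finset.sum_ite, Finset.sum_const, Finset.sum_const]
    have h1 : Finset.univ.filter (fun i : Fin D.length => i ∈ S) = S := by
      ext i; simp
    have h2 : Finset.univ.filter (fun i : Fin D.length => i ∉ S) = Sᶜ := by
      ext i; simp
    rw [h1, h2, smul_eq_mul, smul_eq_mul, Finset.card_compl, Fintype.card_fin]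
  have hfin := le_grundyT (strongProd G H) hlegal
  rw [hlen] at hfin
  have heq : grundyT G * aD H D + (D.length - aD H D) * grundyDom G
      = S.card * LT.length + (D.length - S.card) * LC.length := by
    rw [← hScard, ← hLTlen, ← hLClen, Nat.mul_comm LT.length S.card]
  rw [heq]
  exact hfin
end
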